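/- Let A ∈ ℝ^{m×m} and C ∈ ℝ^{n×n} be symmetric real matrices, B ∈ ℝ^{m×n}, and η ∈ ℝ. If θ, φ, θ', φ' satisfy the implicit linearized SPPM equations θ' = θ − ηAθ − ηBφ' and φ' = φ + ηBᵀθ' + ηCφ, then ‖θ'‖² + ‖φ'‖² ≤ ‖I_m − ηA‖_op² ‖θ‖² / (1 + η² λ_min(BBᵀ)) + ‖I_n + ηC‖_op² ‖φ‖² / (1 + η² λ_min(BᵀB)), where λ_min denotes the smallest eigenvalue of a symmetric positive semidefinite matrix and ‖·‖_op the operator norm (which equals the spectral radius for symmetric matrices). -/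

import Mathlib

open Matrix Filter Topology

/-- The squared Euclidean norm of a vector `v : ι → ℝ`. -/
noncomputable def eNormSq {ι : Type*} [Fintype ι] (v : ι → ℝ) : ℝ :=
  ‖(EuclideanSpace.equiv ι ℝ).symm v‖ ^ 2

lemma eNormSq_eq_dot {ι : Type*} [Fintype ι] (v : ι → ℝ) :
    eNormSq v = v ⬝ᵥ v := by
  rw [eNormSq, EuclideanSpace.norm_eq, Real.sq_sqrt (by positivity)]
  simp [dotProduct, sq]

lemma rayleigh_lower {ι : Type*} [Fintype ι] [DecidableEq ι]
    {M : Matrix ι ι ℝ} (hM : M.IsHermitian) {c : ℝ}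
    (hc : ∀ i, c ≤ hM.eigenvalues i) (x : ι → ℝ) :
    c * (x ⬝ᵥ x) ≤ x ⬝ᵥ (M *ᵥ x) := by
  set U := (hM.eigenvectorUnitary : Matrix ι ι ℝ) with hUdef
  have hU : U * star U = 1 := (Matrix.mem_unitaryGroup_iff).mp hM.eigenvectorUnitary.2
  have hMc : M - c • 1 = U * Matrix.diagonal (fun i => hM.eigenvalues i - c) * star U := by
    have hspec := hM.spectral_theorem
    simp only [Unitary.conjStarAlgAut_apply, Unitary.coe_star, ← hUdef] at hspec
    have hd : Matrix.diagonal (fun i => hM.eigenvalues i - c)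
        = Matrix.diagonal (RCLike.ofReal ∘ hM.eigenvalues) - c • (1 : Matrix ι ι ℝ) := by
      ext i j
      by_cases h : i = j <;> simp [Matrix.diagonal, Matrix.one_apply, h]
    rw [hd, Matrix.mul_sub, Matrix.sub_mul, ← hspec]
    congr 1
    rw [Matrix.mul_smul, Matrix.smul_mul, mul_one, hU]
  have hPS : (M - c • 1).PosSemidef := by
    rw [hMc]
    have hstar : (star U) = Uᴴ := rfl
    rw [hstar]
    exact (Matrix.PosSemidef.diagonal fun i => sub_nonneg.2 (hc i)).mul_mul_conjTranspose_same U
  have h2 := hPS.dotProduct_mulVec_nonneg x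
  rw [star_trivial, Matrix.sub_mulVec, Matrix.smul_mulVec, Matrix.one_mulVec,
    dotProduct_sub, dotProduct_smul] at h2
  simp only [smul_eq_mul] at h2
  linarith

lemma dot_self_nonneg {ι : Type*} [Fintype ι] (v : ι → ℝ) : 0 ≤ v ⬝ᵥ v :=
  Finset.sum_nonneg fun i _ => mul_self_nonneg (v i)

lemma dot_CS {ι : Type*} [Fintype ι] (v w : ι → ℝ) :
    (v ⬝ᵥ w) ^ 2 ≤ (v ⬝ᵥ v) * (w ⬝ᵥ w) := by
  simpa [dotProduct, sq] using Finset.sum_mul_sq_le_sq_mul_sq Finset.univ v w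

lemma hres_aux {ι : Type*} [Fintype ι] (a b : ι → ℝ) (c : ℝ) (hc : 0 < c)
    (h : c * (a ⬝ᵥ a) ≤ a ⬝ᵥ b) : a ⬝ᵥ b ≤ (b ⬝ᵥ b) / c := by
  have hCS := dot_CS a b
  have haa := dot_self_nonneg a
  have hbb := dot_self_nonneg b
  have hs : 0 ≤ a ⬝ᵥ b := le_trans (mul_nonneg hc.le haa) h
  rcases eq_or_lt_of_le hs with h0 | hpos
  · rw [← h0]; positivity
  · rw [le_div_iff₀ hc]
    have h3 : (a ⬝ᵥ b) * c * (a ⬝ᵥ b) ≤ (b ⬝ᵥ b) * (a ⬝ᵥ b) := by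
      nlinarith [mul_le_mul_of_nonneg_right h (le_of_lt hpos)]
    have := le_of_mul_le_mul_right h3 hpos
    linarith

lemma hopb_aux {ι : Type*} [Fintype ι] [DecidableEq ι] (M : Matrix ι ι ℝ) (x : ι → ℝ) :
    (M *ᵥ x) ⬝ᵥ (M *ᵥ x) ≤ ‖Matrix.toEuclideanCLM (𝕜 := ℝ) M‖ ^ 2 * (x ⬝ᵥ x) := by
  have h1 : (EuclideanSpace.equiv ι ℝ).symm (M *ᵥ x) =
      Matrix.toEuclideanCLM (𝕜 := ℝ) M ((EuclideanSpace.equiv ι ℝ).symm x) :=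
    (Matrix.toEuclideanCLM_toLp M x).symm
  rw [← eNormSq_eq_dot, ← eNormSq_eq_dot, eNormSq, eNormSq, h1]
  have h2 := (Matrix.toEuclideanCLM (𝕜 := ℝ) M).le_opNorm ((EuclideanSpace.equiv ι ℝ).symm x)
  nlinarith [norm_nonneg (Matrix.toEuclideanCLM (𝕜 := ℝ) M ((EuclideanSpace.equiv ι ℝ).symm x)),
    norm_nonneg ((EuclideanSpace.equiv ι ℝ).symm x), norm_nonneg (Matrix.toEuclideanCLM (𝕜 := ℝ) M)]

/-- local contraction estimate for the linearized SPPM step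
(Theorem 2 of the paper, appendix form). -/
theorem linearized_sppm_contraction_estimate
    (m n : ℕ) (A : Matrix (Fin m) (Fin m) ℝ) (C : Matrix (Fin n) (Fin n) ℝ)
    (B : Matrix (Fin m) (Fin n) ℝ) (η : ℝ)
    (hA : A.IsHermitian) (hC : C.IsHermitian)
    (hBBt : (B * Bᵀ).IsHermitian) (hBtB : (Bᵀ * B).IsHermitian)
    (lmin₁ lmin₂ : ℝ)
    (hlmin₁ : IsLeast (Set.range hBBt.eigenvalues) lmin₁)
    (hlmin₂ : IsLeast (Set.range hBtB.eigenvalues) lmin₂)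
    (θ θ' : Fin m → ℝ) (φ φ' : Fin n → ℝ)
    (hθ' : θ' = θ - η • (A *ᵥ θ) - η • (B *ᵥ φ'))
    (hφ' : φ' = φ + η • (Bᵀ *ᵥ θ') + η • (C *ᵥ φ)) :
    eNormSq θ' + eNormSq φ' ≤
      ‖Matrix.toEuclideanCLM (𝕜 := ℝ) ((1 : Matrix (Fin m) (Fin m) ℝ) - η • A)‖ ^ 2 *
          eNormSq θ / (1 + η ^ 2 * lmin₁) +
      ‖Matrix.toEuclideanCLM (𝕜 := ℝ) ((1 : Matrix (Fin n) (Fin n) ℝ) + η • C)‖ ^ 2 *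
          eNormSq φ / (1 + η ^ 2 * lmin₂) := by
  classical
  -- basic positivity facts
  have hPSD1 : (B * Bᵀ).PosSemidef := by
    simpa [conjTranspose_eq_transpose_of_trivial] using
      Matrix.posSemidef_self_mul_conjTranspose B
  have hPSD2 : (Bᵀ * B).PosSemidef := by
    simpa [conjTranspose_eq_transpose_of_trivial] using
      Matrix.posSemidef_conjTranspose_mul_self B
  obtain ⟨i₁, hi₁⟩ := hlmin₁.1
  obtain ⟨i₂, hi₂⟩ := hlmin₂.1
  have hl1 : 0 ≤ lmin₁ := by rw [← hi₁]; exact hPSD1.eigenvalues_nonneg i₁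
  have hl2 : 0 ≤ lmin₂ := by rw [← hi₂]; exact hPSD2.eigenvalues_nonneg i₂
  have hc₁ : (0:ℝ) < 1 + η ^ 2 * lmin₁ := by nlinarith [sq_nonneg η]
  have hc₂ : (0:ℝ) < 1 + η ^ 2 * lmin₂ := by nlinarith [sq_nonneg η]
  have hrl1 : ∀ x : Fin m → ℝ, lmin₁ * (x ⬝ᵥ x) ≤ x ⬝ᵥ ((B * Bᵀ) *ᵥ x) :=
    fun x => rayleigh_lower hBBt (fun i => hlmin₁.2 ⟨i, rfl⟩) x
  have hrl2 : ∀ x : Fin n → ℝ, lmin₂ * (x ⬝ᵥ x) ≤ x ⬝ᵥ ((Bᵀ * B) *ᵥ x) :=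
    fun x => rayleigh_lower hBtB (fun i => hlmin₂.2 ⟨i, rfl⟩) x
  -- abbreviations
  set u : Fin m → ℝ := θ - η • (A *ᵥ θ) with hu
  set v : Fin n → ℝ := φ + η • (C *ᵥ φ) with hv
  set M₁ : Matrix (Fin m) (Fin m) ℝ := 1 + (η ^ 2) • (B * Bᵀ) with hM₁
  set M₂ : Matrix (Fin n) (Fin n) ℝ := 1 + (η ^ 2) • (Bᵀ * B) with hM₂
  have hφ'2 : φ' = v + η • (Bᵀ *ᵥ θ') := by rw [hφ', hv]; abel
  -- implicit equations for θ', φ'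
  have hM1v : M₁ *ᵥ θ' = u - η • (B *ᵥ v) := by
    have e1 : θ' = u - η • (B *ᵥ v) - (η ^ 2) • (B *ᵥ (Bᵀ *ᵥ θ')) := by
      calc θ' = u - η • (B *ᵥ φ') := hθ'
      _ = u - η • (B *ᵥ (v + η • (Bᵀ *ᵥ θ'))) := by rw [← hφ'2]
      _ = u - η • (B *ᵥ v) - (η ^ 2) • (B *ᵥ (Bᵀ *ᵥ θ')) := by
          rw [mulVec_add, mulVec_smul]; module
    rw [hM₁, add_mulVec, one_mulVec, smul_mulVec, ← mulVec_mulVec]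
    nth_rewrite 1 [e1]
    module
  have hM2v : M₂ *ᵥ φ' = v + η • (Bᵀ *ᵥ u) := by
    have e2 : φ' = v + η • (Bᵀ *ᵥ u) - (η ^ 2) • (Bᵀ *ᵥ (B *ᵥ φ')) := by
      calc φ' = v + η • (Bᵀ *ᵥ θ') := hφ'2
      _ = v + η • (Bᵀ *ᵥ (u - η • (B *ᵥ φ'))) := by rw [← hθ']
      _ = v + η • (Bᵀ *ᵥ u) - (η ^ 2) • (Bᵀ *ᵥ (B *ᵥ φ')) := by
          rw [mulVec_sub, mulVec_smul]; module
    rw [hM₂, add_mulVec, one_mulVec, smul_mulVec, ← mulVec_mulVec]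
    nth_rewrite 1 [e2]
    module
  -- invertibility
  have hPD1 : M₁.PosDef := by
    refine Matrix.PosDef.add_posSemidef Matrix.PosDef.one (Matrix.PosSemidef.of_dotProduct_mulVec_nonneg ?_ ?_)
    · rw [Matrix.IsHermitian, conjTranspose_smul, star_trivial, hBBt.eq]
    · intro x
      rw [smul_mulVec, dotProduct_smul, smul_eq_mul]
      exact mul_nonneg (sq_nonneg η) (hPSD1.dotProduct_mulVec_nonneg x)
  have hPD2 : M₂.PosDef := by
    refine Matrix.PosDef.add_posSemidef Matrix.PosDef.one (Matrix.PosSemidef.of_dotProduct_mulVec_nonneg ?_ ?_)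
    · rw [Matrix.IsHermitian, conjTranspose_smul, star_trivial, hBtB.eq]
    · intro x
      rw [smul_mulVec, dotProduct_smul, smul_eq_mul]
      exact mul_nonneg (sq_nonneg η) (hPSD2.dotProduct_mulVec_nonneg x)
  have hdet1 : IsUnit M₁.det := isUnit_iff_ne_zero.mpr hPD1.det_pos.ne'
  have hdet2 : IsUnit M₂.det := isUnit_iff_ne_zero.mpr hPD2.det_pos.ne'
  set p : Fin m → ℝ := M₁⁻¹ *ᵥ u with hpdef
  set q : Fin n → ℝ := M₂⁻¹ *ᵥ v with hqdef
  have hp : M₁ *ᵥ p = u := by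
    rw [hpdef, mulVec_mulVec, Matrix.mul_nonsing_inv _ hdet1, one_mulVec]
  have hq : M₂ *ᵥ q = v := by
    rw [hqdef, mulVec_mulVec, Matrix.mul_nonsing_inv _ hdet2, one_mulVec]
  have hinj1 : ∀ x y : Fin m → ℝ, M₁ *ᵥ x = M₁ *ᵥ y → x = y := by
    intro x y h
    have h' := congrArg (fun z => M₁⁻¹ *ᵥ z) h
    simpa [mulVec_mulVec, Matrix.nonsing_inv_mul _ hdet1, one_mulVec] using h'
  have hinj2 : ∀ x y : Fin n → ℝ, M₂ *ᵥ x = M₂ *ᵥ y → x = y := by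
    intro x y h
    have h' := congrArg (fun z => M₂⁻¹ *ᵥ z) h
    simpa [mulVec_mulVec, Matrix.nonsing_inv_mul _ hdet2, one_mulVec] using h'
  have hcomm1 : M₁ * B = B * M₂ := by
    rw [hM₁, hM₂]
    simp only [Matrix.add_mul, Matrix.mul_add, Matrix.one_mul, Matrix.mul_one,
      Matrix.smul_mul, Matrix.mul_smul, Matrix.mul_assoc]
  have hcomm2 : M₂ * Bᵀ = Bᵀ * M₁ := by
    rw [hM₁, hM₂]
    simp only [Matrix.add_mul, Matrix.mul_add, Matrix.one_mul, Matrix.mul_one,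
      Matrix.smul_mul, Matrix.mul_smul, Matrix.mul_assoc]
  -- explicit form of θ', φ'
  have hθ'p : θ' = p - η • (B *ᵥ q) := by
    apply hinj1
    rw [hM1v, mulVec_sub, mulVec_smul, hp, mulVec_mulVec, hcomm1, ← mulVec_mulVec, hq]
  have hφ'q : φ' = q + η • (Bᵀ *ᵥ p) := by
    apply hinj2
    rw [hM2v, mulVec_add, mulVec_smul, hq, mulVec_mulVec, hcomm2, ← mulVec_mulVec, hp]
  -- adjoint identity
  have hadj : ∀ (x : Fin m → ℝ) (y : Fin n → ℝ), x ⬝ᵥ (B *ᵥ y) = (Bᵀ *ᵥ x) ⬝ᵥ y := by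
    intro x y
    rw [mulVec_transpose, ← dotProduct_mulVec]
  -- key identity
  have hkey : θ' ⬝ᵥ θ' + φ' ⬝ᵥ φ' = p ⬝ᵥ u + q ⬝ᵥ v := by
    rw [hθ'p, hφ'q, ← hp, ← hq, hM₁, hM₂, add_mulVec, one_mulVec, smul_mulVec,
      add_mulVec, one_mulVec, smul_mulVec, ← mulVec_mulVec (M := B),
      ← mulVec_mulVec (M := Bᵀ)]
    simp only [dotProduct_sub, sub_dotProduct, dotProduct_add, add_dotProduct,
      dotProduct_smul, smul_dotProduct, smul_eq_mul]
    rw [hadj p q, hadj p (Bᵀ *ᵥ p), dotProduct_comm (B *ᵥ q) p, hadj p q,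
      dotProduct_comm (B *ᵥ q) (B *ᵥ q), hadj (B *ᵥ q) q,
      dotProduct_comm (Bᵀ *ᵥ p) q, dotProduct_comm (Bᵀ *ᵥ (B *ᵥ q)) q]
    ring
  -- quadratic form bounds
  have hqf1 : (1 + η ^ 2 * lmin₁) * (p ⬝ᵥ p) ≤ p ⬝ᵥ u := by
    rw [← hp, hM₁, add_mulVec, one_mulVec, smul_mulVec, dotProduct_add,
      dotProduct_smul, smul_eq_mul]
    nlinarith [hrl1 p, sq_nonneg η, dot_self_nonneg p]
  have hqf2 : (1 + η ^ 2 * lmin₂) * (q ⬝ᵥ q) ≤ q ⬝ᵥ v := by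
    rw [← hq, hM₂, add_mulVec, one_mulVec, smul_mulVec, dotProduct_add,
      dotProduct_smul, smul_eq_mul]
    nlinarith [hrl2 q, sq_nonneg η, dot_self_nonneg q]
  have hb1 : p ⬝ᵥ u ≤ (u ⬝ᵥ u) / (1 + η ^ 2 * lmin₁) := hres_aux p u _ hc₁ hqf1
  have hb2 : q ⬝ᵥ v ≤ (v ⬝ᵥ v) / (1 + η ^ 2 * lmin₂) := hres_aux q v _ hc₂ hqf2
  have hueq : u = ((1 : Matrix (Fin m) (Fin m) ℝ) - η • A) *ᵥ θ := by
    rw [sub_mulVec, one_mulVec, smul_mulVec, hu]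
  have hveq : v = ((1 : Matrix (Fin n) (Fin n) ℝ) + η • C) *ᵥ φ := by
    rw [add_mulVec, one_mulVec, smul_mulVec, hv]
  have huN : u ⬝ᵥ u ≤ ‖Matrix.toEuclideanCLM (𝕜 := ℝ) ((1 : Matrix (Fin m) (Fin m) ℝ) - η • A)‖ ^ 2 * (θ ⬝ᵥ θ) := by
    rw [hueq]; exact hopb_aux _ θ
  have hvN : v ⬝ᵥ v ≤ ‖Matrix.toEuclideanCLM (𝕜 := ℝ) ((1 : Matrix (Fin n) (Fin n) ℝ) + η • C)‖ ^ 2 * (φ ⬝ᵥ φ) := by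
    rw [hveq]; exact hopb_aux _ φ
  -- assemble
  rw [eNormSq_eq_dot, eNormSq_eq_dot, eNormSq_eq_dot, eNormSq_eq_dot, hkey]
  have hfin1 : p ⬝ᵥ u ≤ ‖Matrix.toEuclideanCLM (𝕜 := ℝ) ((1 : Matrix (Fin m) (Fin m) ℝ) - η • A)‖ ^ 2 * (θ ⬝ᵥ θ) / (1 + η ^ 2 * lmin₁) :=
    le_trans hb1 ((div_le_div_iff_of_pos_right hc₁).mpr huN)
  have hfin2 : q ⬝ᵥ v ≤ ‖Matrix.toEuclideanCLM (𝕜 := ℝ) ((1 : Matrix (Fin n) (Fin n) ℝ) + η • C)‖ ^ 2 * (φ ⬝ᵥ φ) / (1 + η ^ 2 * lmin₂) :=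
    le_trans hb2 ((div_le_div_iff_of_pos_right hc₂).mpr hvN)
  linarith
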